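/- (Derivative of the squared gauge along a disto-line.) Let ℓ ≥ 1, let (c,d) ∈ ℝ² with c ≠ 0, let ϱ ∈ ℝ, and let (t,s) ∈ ℝ². Along the disto-line t(τ) = t + ϱτ, s(τ) = s + (d/f_ℓ(c))(f_ℓ(t(τ)) − f_ℓ(t)), the function ψ(τ) := |t(τ)|^{2ℓ} + s(τ)² is differentiable on ℝ, with ψ′(τ) = (2ϱ/f_ℓ(c)) · ℓ|t(τ)|^{ℓ−1} · ⟨(c,d)|(t(τ),s(τ))⟩_ℓ for every τ ∈ ℝ. -/

import Mathlib

open MeasureTheory Real Set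

noncomputable section

/-- `f_ℓ(σ) = σ|σ|^{ℓ-1}`. -/
def fl (l : ℝ) (σ : ℝ) : ℝ := σ * |σ| ^ (l - 1)

/-- The disto-scalar product `⟨v|w⟩_ℓ`. -/
def distoDot (l : ℝ) (v w : ℝ × ℝ) : ℝ := fl l v.1 * fl l w.1 + v.2 * w.2

/-- The distorted determinant `Δ_ℓ(v;w)`. -/
def distoDet (l : ℝ) (v w : ℝ × ℝ) : ℝ := fl l v.1 * w.2 - v.2 * fl l w.1

/-- The quasihomogeneous gauge `ρ(t,s)`. -/
def qgauge (l : ℝ) (p : ℝ × ℝ) : ℝ := (|p.1| ^ (2 * l) + p.2 ^ 2) ^ (1 / (2 * l))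

/-- First coordinate of the disto-line through `(t,s)` parallel to `(c,d)` with speed `ϱ`. -/
def lineT (ϱ t : ℝ) (τ : ℝ) : ℝ := t + ϱ * τ

/-- Second coordinate of the disto-line through `(t,s)` parallel to `(c,d)` with speed `ϱ`. -/
def lineS (l c d ϱ t s : ℝ) (τ : ℝ) : ℝ := s + d / fl l c * (fl l (t + ϱ * τ) - fl l t)


lemma fl_ne_zero {l c : ℝ} (hc : c ≠ 0) : fl l c ≠ 0 := by
  have : |c| ^ (l - 1) ≠ 0 := (Real.rpow_pos_of_pos (abs_pos.mpr hc) _).ne'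
  exact mul_ne_zero hc this

lemma hasDerivAt_fl {l : ℝ} (hl : 1 ≤ l) (x : ℝ) :
    HasDerivAt (fl l) (l * |x| ^ (l - 1)) x := by
  rcases eq_or_lt_of_le hl with rfl | hl1
  · have : fl 1 = id := by
      funext y; simp [fl]
    rw [this]
    simpa using hasDerivAt_id x
  rcases lt_trichotomy x 0 with hx | hx | hx
  · have h1 : HasDerivAt (fun y : ℝ => -((-y) ^ l)) (l * (-x) ^ (l - 1)) x := by
      have := (Real.hasDerivAt_rpow_const (p := l) (Or.inl (neg_ne_zero.mpr hx.ne))).comp x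
        (hasDerivAt_neg x)
      rw [show l * (-x) ^ (l - 1) = -(l * (-x) ^ (l - 1) * -1) by ring]
      exact this.neg
    rw [abs_of_neg hx]
    refine h1.congr_of_eventuallyEq ?_
    filter_upwards [eventually_lt_nhds hx] with y hy
    have h2 : (-y) ^ (1 + (l - 1)) = -y * (-y) ^ (l - 1) :=
      Real.rpow_one_add' (by linarith) (by linarith)
    rw [show (1 : ℝ) + (l - 1) = l by ring] at h2
    rw [fl, abs_of_neg hy, h2]
    ring
  · subst hx
    have hlim : Filter.Tendsto (fun y : ℝ => |y| ^ (l - 1)) (nhds 0) (nhds 0) := by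
      have : Filter.Tendsto (fun y : ℝ => y ^ (l - 1)) (nhds (0:ℝ)) (nhds ((0:ℝ) ^ (l-1))) :=
        (Real.continuousAt_rpow_const 0 (l-1) (Or.inr (by linarith))).tendsto
      rw [Real.zero_rpow (by linarith : l - 1 ≠ 0)] at this
      exact this.comp (continuous_abs.tendsto' 0 0 abs_zero)
    have h0 : l * |(0:ℝ)| ^ (l - 1) = 0 := by
      rw [abs_zero, Real.zero_rpow (by linarith : l - 1 ≠ 0), mul_zero]
    rw [h0, hasDerivAt_iff_tendsto_slope]
    refine Filter.Tendsto.congr' ?_ (hlim.mono_left nhdsWithin_le_nhds)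
    filter_upwards [self_mem_nhdsWithin] with y hy
    have hy0 : y ≠ 0 := hy
    rw [slope_def_field, fl, fl]
    field_simp
    simp
  · have h1 : HasDerivAt (fun y : ℝ => y ^ l) (l * x ^ (l - 1)) x :=
      Real.hasDerivAt_rpow_const (Or.inl hx.ne')
    rw [abs_of_pos hx]
    refine h1.congr_of_eventuallyEq ?_
    filter_upwards [eventually_gt_nhds hx] with y hy
    have h2 : y ^ (1 + (l - 1)) = y * y ^ (l - 1) :=
      Real.rpow_one_add' hy.le (by linarith)
    rw [show (1 : ℝ) + (l - 1) = l by ring] at h2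
    rw [fl, abs_of_pos hy, h2]


lemma fl_sq {l : ℝ} (hl : 1 ≤ l) (y : ℝ) : (fl l y) ^ 2 = |y| ^ (2 * l) := by
  have h1 : (|y| ^ (l - 1)) ^ 2 = |y| ^ ((l - 1) * 2) := by
    rw [← Real.rpow_natCast (|y| ^ (l - 1)) 2, ← Real.rpow_mul (abs_nonneg y)]
    norm_num
  have h2 : |y| ^ (2 : ℝ) = |y| ^ (2 : ℕ) := Real.rpow_natCast _ 2
  have h3 : |y| ^ ((2 : ℝ) + (l - 1) * 2) = |y| ^ (2 : ℝ) * |y| ^ ((l - 1) * 2) :=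
    Real.rpow_add' (abs_nonneg y) (by linarith)
  have : (fl l y) ^ 2 = y ^ 2 * (|y| ^ (l - 1)) ^ 2 := by rw [fl]; ring
  rw [this, h1, ← sq_abs, ← h2, ← h3]
  ring_nf


/-- derivative of the squared gauge along a disto-line. -/
theorem hasDerivAt_gauge_sq_along_line (l : ℝ) (hl : 1 ≤ l) (c d : ℝ) (hc : c ≠ 0)
    (ϱ t s : ℝ) (τ : ℝ) :
    HasDerivAt (fun τ' => |lineT ϱ t τ'| ^ (2 * l) + (lineS l c d ϱ t s τ') ^ 2)
      (2 * ϱ / fl l c * (l * |lineT ϱ t τ| ^ (l - 1)) *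
        distoDot l (c, d) (lineT ϱ t τ, lineS l c d ϱ t s τ)) τ := by
  have hT : HasDerivAt (lineT ϱ t) ϱ τ := by
    have := ((hasDerivAt_id τ).const_mul ϱ).const_add t
    rw [mul_one] at this
    exact this
  have hflT : HasDerivAt (fun τ' => fl l (lineT ϱ t τ')) (l * |lineT ϱ t τ| ^ (l - 1) * ϱ) τ :=
    (hasDerivAt_fl hl (lineT ϱ t τ)).comp τ hT
  have hS : HasDerivAt (lineS l c d ϱ t s)
      (d / fl l c * (l * |lineT ϱ t τ| ^ (l - 1) * ϱ)) τ := by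
    exact ((hflT.sub_const (fl l t)).const_mul (d / fl l c)).const_add s
  have h := (hflT.pow 2).add (hS.pow 2)
  have heq : (fun τ' => |lineT ϱ t τ'| ^ (2 * l) + (lineS l c d ϱ t s τ') ^ 2) =
      (fun τ' => fl l (lineT ϱ t τ') ^ 2 + lineS l c d ϱ t s τ' ^ 2) := by
    funext τ'; rw [fl_sq hl]
  rw [heq]
  refine h.congr_deriv ?_
  have hfc : fl l c ≠ 0 := fl_ne_zero hc
  simp only [distoDot]
  field_simp
  ring

end
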